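/- Let α > 0 and let β, γ, ρ be real numbers with ρ > 0 and ρ > β - γ. Then for every t > 0, the Saigo fractional integral of the power function s^{ρ-1} satisfies (t^{-α-β}/Γ(α)) ∫_0^t (t-s)^{α-1} ₂F₁(α+β, -γ; α; 1 - s/t) s^{ρ-1} ds = [Γ(ρ)Γ(ρ-β+γ) / (Γ(ρ-β)Γ(ρ+α+γ))] · t^{ρ-β-1}. -/

import Mathlib

open Real Finset

open Filter Topology MeasureTheory intervalIntegral

/-- Rising factorial `(x)^{(k)} = x(x+1)⋯(x+k-1)`. -/
noncomputable def risingFac (x : ℝ) (k : ℕ) : ℝ := ∏ i ∈ Finset.range k, (x + i)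

/-- Gauss hypergeometric function `₂F₁(a,b;c;z)`. -/
noncomputable def hyp2F1 (a b c z : ℝ) : ℝ :=
  ∑' k : ℕ, (risingFac a k * risingFac b k / risingFac c k) * z ^ k / k.factorial

/-- Saigo fractional integral operator `I^{α,β,γ}_t`. -/
noncomputable def saigoI (α β γ : ℝ) (f : ℝ → ℝ) (t : ℝ) : ℝ :=
  (t ^ (-α - β) / Real.Gamma α) *
    ∫ s in (0:ℝ)..t, (t - s) ^ (α - 1) * hyp2F1 (α + β) (-γ) α (1 - s / t) * f s


lemma risingFac_zero (x : ℝ) : risingFac x 0 = 1 := by simp [risingFac]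

lemma risingFac_succ (x : ℝ) (k : ℕ) : risingFac x (k + 1) = risingFac x k * (x + k) := by
  simp [risingFac, Finset.prod_range_succ]

lemma risingFac_pos {x : ℝ} (hx : 0 < x) (k : ℕ) : 0 < risingFac x k := by
  refine Finset.prod_pos fun i _ => ?_
  positivity

lemma abs_risingFac_le {x y : ℝ} (h : |x| ≤ y) (k : ℕ) : |risingFac x k| ≤ risingFac y k := by
  rw [risingFac, risingFac, Finset.abs_prod]
  refine Finset.prod_le_prod (fun i _ => abs_nonneg _) fun i _ => ?_
  calc |x + (i:ℝ)| ≤ |x| + (i:ℝ) := by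
        refine (abs_add_le _ _).trans ?_; simp
    _ ≤ y + i := by linarith

lemma risingFac_add (x : ℝ) (m k : ℕ) :
    risingFac x (m + k) = risingFac x m * risingFac (x + m) k := by
  induction k with
  | zero => simp [risingFac_zero]
  | succ n ih =>
      rw [← Nat.add_assoc, risingFac_succ, ih, risingFac_succ]
      push_cast
      ring

lemma Gamma_add_nat {x : ℝ} (hx : 0 < x) (k : ℕ) :
    Real.Gamma (x + k) = risingFac x k * Real.Gamma x := by
  induction k with
  | zero => simp [risingFac_zero]
  | succ n ih =>
      have hxn : x + n ≠ 0 := by positivity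
      have : x + (n + 1 : ℕ) = (x + n) + 1 := by push_cast; ring
      rw [this, Real.Gamma_add_one hxn, ih, risingFac_succ]
      ring

lemma factorial_eq_risingFac (m j : ℕ) :
    ((m + j).factorial : ℝ) = (m.factorial : ℝ) * risingFac (m + 1) j := by
  induction j with
  | zero => simp [risingFac_zero]
  | succ n ih =>
      rw [← Nat.add_assoc, Nat.factorial_succ, risingFac_succ]
      push_cast [ih]
      ring

lemma Gamma_combo_le {y1 y2 θ : ℝ} (h1 : 0 < y1) (h2 : 0 < y2) (hθ0 : 0 ≤ θ) (hθ1 : θ ≤ 1) :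
    Real.Gamma (θ * y1 + (1 - θ) * y2) ≤ Real.Gamma y1 ^ θ * Real.Gamma y2 ^ (1 - θ) := by
  have hcomb : (0:ℝ) < θ * y1 + (1 - θ) * y2 := by
    rcases eq_or_lt_of_le hθ1 with h | h
    · subst h; simpa using h1
    · have : 0 < (1 - θ) * y2 := mul_pos (by linarith) h2
      have : 0 ≤ θ * y1 := mul_nonneg hθ0 h1.le
      linarith
  have h := Real.convexOn_log_Gamma.2 (Set.mem_Ioi.mpr h1) (Set.mem_Ioi.mpr h2) hθ0
    (show (0:ℝ) ≤ 1 - θ by linarith) (show θ + (1 - θ) = 1 by ring)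
  have hlog : Real.log (Real.Gamma (θ * y1 + (1 - θ) * y2)) ≤
      θ * Real.log (Real.Gamma y1) + (1 - θ) * Real.log (Real.Gamma y2) := by
    simpa [Function.comp, smul_eq_mul] using h
  rw [mul_comm θ (Real.log _), mul_comm (1-θ) (Real.log _)] at hlog
  calc Real.Gamma (θ * y1 + (1 - θ) * y2)
      = Real.exp (Real.log (Real.Gamma (θ * y1 + (1 - θ) * y2))) :=
        (Real.exp_log (Real.Gamma_pos_of_pos hcomb)).symm
    _ ≤ Real.exp (Real.log (Real.Gamma y1) * θ + Real.log (Real.Gamma y2) * (1 - θ)) :=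
        Real.exp_le_exp.mpr hlog
    _ = Real.Gamma y1 ^ θ * Real.Gamma y2 ^ (1 - θ) := by
        rw [Real.exp_add, Real.exp_mul, Real.exp_mul,
          Real.exp_log (Real.Gamma_pos_of_pos h1), Real.exp_log (Real.Gamma_pos_of_pos h2)]

lemma Gamma_gautschi_upper {y s : ℝ} (hy : 0 < y) (hs0 : 0 ≤ s) (hs1 : s ≤ 1) :
    Real.Gamma (y + s) ≤ Real.Gamma y * y ^ s := by
  have key := Gamma_combo_le (y1 := y) (y2 := y + 1) (θ := 1 - s) (by linarith) (by linarith)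
    (by linarith) (by linarith)
  have hc : (1 - s) * y + (1 - (1 - s)) * (y + 1) = y + s := by ring
  rw [hc, show (1 - (1 - s)) = s by ring] at key
  have hΓy : 0 < Real.Gamma y := Real.Gamma_pos_of_pos hy
  calc Real.Gamma (y + s) ≤ Real.Gamma y ^ (1 - s) * Real.Gamma (y + 1) ^ s := key
    _ = Real.Gamma y * y ^ s := by
        rw [Real.Gamma_add_one hy.ne', Real.mul_rpow hy.le hΓy.le,
          show Real.Gamma y ^ (1-s) * (y ^ s * Real.Gamma y ^ s)
            = Real.Gamma y ^ (1-s) * Real.Gamma y ^ s * y ^ s from by ring,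
          ← Real.rpow_add hΓy, show (1 - s + s) = 1 by ring, Real.rpow_one]

lemma Gamma_gautschi_lower {y s : ℝ} (hy : 1 ≤ y) (hs0 : 0 ≤ s) (hs1 : s ≤ 1) :
    Real.Gamma y * y ^ s ≤ 2 * Real.Gamma (y + s) := by
  have hy0 : (0:ℝ) < y := by linarith
  have hys : (0:ℝ) < y + s := by linarith
  have key := Gamma_combo_le (y1 := y + s) (y2 := y + s + 1) (θ := s) hys (by linarith) hs0 hs1
  have hc : s * (y + s) + (1 - s) * (y + s + 1) = y + 1 := by ring
  rw [hc] at key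
  have hΓ : 0 < Real.Gamma (y + s) := Real.Gamma_pos_of_pos hys
  have key2 : Real.Gamma (y + 1) ≤ Real.Gamma (y + s) * (y + s) ^ (1 - s) := by
    calc Real.Gamma (y + 1) ≤ Real.Gamma (y+s) ^ s * Real.Gamma (y+s+1) ^ (1-s) := key
      _ = Real.Gamma (y+s) * (y+s) ^ (1-s) := by
          rw [Real.Gamma_add_one hys.ne', Real.mul_rpow hys.le hΓ.le,
            show Real.Gamma (y+s) ^ s * ((y+s) ^ (1-s) * Real.Gamma (y+s) ^ (1-s))
              = Real.Gamma (y+s) ^ s * Real.Gamma (y+s) ^ (1-s) * (y+s) ^ (1-s) from by ring,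
            ← Real.rpow_add hΓ, show s + (1-s) = 1 by ring, Real.rpow_one]
  rw [Real.Gamma_add_one hy0.ne'] at key2
  have hb : (y + s) ^ (1 - s) ≤ 2 * y ^ (1 - s) := by
    have h2y : y + s ≤ 2 * y := by linarith
    calc (y + s) ^ (1 - s) ≤ (2 * y) ^ (1 - s) :=
          Real.rpow_le_rpow hys.le h2y (by linarith)
      _ = 2 ^ (1 - s) * y ^ (1 - s) := Real.mul_rpow (by norm_num) hy0.le
      _ ≤ 2 * y ^ (1 - s) := by
          have h1 : (2:ℝ) ^ (1 - s) ≤ 2 ^ (1:ℝ) :=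
            Real.rpow_le_rpow_of_exponent_le (by norm_num) (by linarith)
          rw [Real.rpow_one] at h1
          exact mul_le_mul_of_nonneg_right h1 (Real.rpow_nonneg hy0.le _)
  have key3 : y * Real.Gamma y ≤ Real.Gamma (y + s) * (2 * y ^ (1 - s)) :=
    key2.trans (mul_le_mul_of_nonneg_left hb hΓ.le)
  have hys' : y * Real.Gamma y * y ^ (s - 1) ≤ Real.Gamma (y+s) * (2 * y ^ (1-s)) * y ^ (s-1) :=
    mul_le_mul_of_nonneg_right key3 (Real.rpow_pos_of_pos hy0 _).le
  calc Real.Gamma y * y ^ s = y * Real.Gamma y * y ^ (s - 1) := by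
        rw [show y * Real.Gamma y * y ^ (s-1) = Real.Gamma y * (y ^ (1:ℝ) * y ^ (s-1)) from by
              rw [Real.rpow_one]; ring,
          ← Real.rpow_add hy0, show (1 + (s-1)) = s by ring]
    _ ≤ Real.Gamma (y+s) * (2 * y ^ (1-s)) * y ^ (s-1) := hys'
    _ = 2 * Real.Gamma (y + s) * (y ^ (1-s) * y ^ (s-1)) := by ring
    _ = 2 * Real.Gamma (y + s) := by
        rw [← Real.rpow_add hy0, show (1-s) + (s-1) = 0 by ring, Real.rpow_zero, mul_one]

lemma Gamma_ratio_bounds {x : ℝ} (hx : 0 < x) :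
    ∃ K1 K2 : ℝ, 0 < K1 ∧ 0 < K2 ∧ ∀ j : ℕ, 1 ≤ j →
      K1 * Real.Gamma j * (j:ℝ) ^ x ≤ Real.Gamma (x + j) ∧
      Real.Gamma (x + j) ≤ K2 * Real.Gamma j * (j:ℝ) ^ x := by
  set n : ℕ := ⌊x⌋₊ with hn
  set s : ℝ := x - n with hs
  have hs0 : 0 ≤ s := by
    have := Nat.floor_le hx.le
    simp only [hs]; linarith
  have hs1 : s < 1 := by
    have := Nat.lt_floor_add_one x
    simp only [hs]; linarith
  have hxns : x = s + n := by simp [hs]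
  refine ⟨1/2, (1 + x) ^ n, by norm_num, by positivity, fun j hj => ?_⟩
  have hj0 : (0:ℝ) < j := by exact_mod_cast hj
  have hj1 : (1:ℝ) ≤ j := by exact_mod_cast hj
  have hsj : (0:ℝ) < s + j := by linarith
  have hxj : x + (j:ℝ) = (s + j) + (n:ℕ) := by rw [hxns]; push_cast; ring
  have hsplit : Real.Gamma (x + j) = risingFac (s + j) n * Real.Gamma (s + j) := by
    rw [hxj, Gamma_add_nat hsj]
  have hΓj : 0 < Real.Gamma (j:ℝ) := Real.Gamma_pos_of_pos hj0
  -- bounds on the product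
  have hprod_lo : (j:ℝ) ^ n ≤ risingFac (s + j) n := by
    have hc : ((j:ℝ))^n = ∏ _i ∈ Finset.range n, (j:ℝ) := by simp
    rw [risingFac, hc]
    refine Finset.prod_le_prod (fun i _ => hj0.le) fun i _ => ?_
    have : (0:ℝ) ≤ s + i := by positivity
    linarith
  have hprod_hi : risingFac (s + j) n ≤ (1 + x) ^ n * (j:ℝ) ^ n := by
    have hc : ((1+x)^n * (j:ℝ)^n) = ∏ _i ∈ Finset.range n, ((1+x) * (j:ℝ)) := by
      simp [mul_pow]
    rw [risingFac, hc]
    refine Finset.prod_le_prod (fun i _ => by positivity) fun i hi => ?_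
    have hi' : (i:ℝ) ≤ n := by
      exact_mod_cast (Finset.mem_range.mp hi).le
    have h1 : s + (j:ℝ) + i ≤ (j:ℝ) + x := by rw [hxns]; linarith
    have h2 : (j:ℝ) + x ≤ (1 + x) * j := by nlinarith
    linarith
  -- bounds on Gamma (s + j)
  have hg_hi : Real.Gamma (s + j) ≤ Real.Gamma j * (j:ℝ) ^ s := by
    rw [add_comm s (j:ℝ)]
    exact Gamma_gautschi_upper hj0 hs0 hs1.le
  have hg_lo : Real.Gamma j * (j:ℝ) ^ s ≤ 2 * Real.Gamma (s + j) := by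
    rw [add_comm s (j:ℝ)]
    exact Gamma_gautschi_lower hj1 hs0 hs1.le
  -- rpow split
  have hrs : (j:ℝ) ^ x = (j:ℝ) ^ n * (j:ℝ) ^ s := by
    rw [hxns, add_comm s (n:ℝ), Real.rpow_add hj0, Real.rpow_natCast]
  have hpow_pos : (0:ℝ) < (j:ℝ) ^ n := by positivity
  have hrpow_pos : (0:ℝ) < (j:ℝ) ^ s := Real.rpow_pos_of_pos hj0 _
  have hΓsj : 0 < Real.Gamma (s + j) := Real.Gamma_pos_of_pos hsj
  constructor
  · -- lower
    rw [hsplit, hrs]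
    have h1 : Real.Gamma j * (j:ℝ)^s / 2 ≤ Real.Gamma (s + j) := by linarith
    calc 1/2 * Real.Gamma j * ((j:ℝ)^n * (j:ℝ)^s)
        = (j:ℝ)^n * (Real.Gamma j * (j:ℝ)^s / 2) := by ring
      _ ≤ risingFac (s+j) n * Real.Gamma (s + j) :=
          mul_le_mul hprod_lo h1 (by positivity) (le_trans (by positivity) hprod_lo)
  · -- upper
    rw [hsplit, hrs]
    calc risingFac (s+j) n * Real.Gamma (s + j)
        ≤ ((1+x)^n * (j:ℝ)^n) * (Real.Gamma j * (j:ℝ)^s) :=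
          mul_le_mul hprod_hi hg_hi hΓsj.le (by positivity)
      _ = (1+x)^n * Real.Gamma j * ((j:ℝ)^n * (j:ℝ)^s) := by ring

/-- `T a b c k`, the absolute value of the `k`-th term of the `₂F₁(a,b;c;1)` series. -/
noncomputable def Tabs (a b c : ℝ) (k : ℕ) : ℝ :=
  |risingFac a k * risingFac b k| / (risingFac c k * k.factorial)

lemma Tabs_nonneg {c : ℝ} (hc : 0 < c) (a b : ℝ) (k : ℕ) : 0 ≤ Tabs a b c k := by
  unfold Tabs
  have h1 : (0:ℝ) < risingFac c k := risingFac_pos hc k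
  have h2 : (0:ℝ) < (k.factorial : ℝ) := by positivity
  exact div_nonneg (abs_nonneg _) (by positivity)

lemma risingFac_upper {x : ℝ} (hx : 0 < x) :
    ∃ C : ℝ, 0 < C ∧ ∀ j : ℕ, 1 ≤ j →
      risingFac x j ≤ C * Real.Gamma j * (j:ℝ) ^ x := by
  obtain ⟨K1, K2, hK1, hK2, hK⟩ := Gamma_ratio_bounds hx
  have hΓx : 0 < Real.Gamma x := Real.Gamma_pos_of_pos hx
  refine ⟨K2 / Real.Gamma x, by positivity, fun j hj => ?_⟩
  have h := (hK j hj).2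
  rw [Gamma_add_nat hx j] at h
  calc risingFac x j = risingFac x j * Real.Gamma x / Real.Gamma x := by field_simp
    _ ≤ K2 * Real.Gamma j * (j:ℝ)^x / Real.Gamma x :=
        div_le_div_of_nonneg_right h hΓx.le
    _ = K2 / Real.Gamma x * Real.Gamma j * (j:ℝ)^x := by ring

lemma risingFac_lower {x : ℝ} (hx : 0 < x) :
    ∃ C : ℝ, 0 < C ∧ ∀ j : ℕ, 1 ≤ j →
      C * Real.Gamma j * (j:ℝ) ^ x ≤ risingFac x j := by
  obtain ⟨K1, K2, hK1, hK2, hK⟩ := Gamma_ratio_bounds hx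
  have hΓx : 0 < Real.Gamma x := Real.Gamma_pos_of_pos hx
  refine ⟨K1 / Real.Gamma x, by positivity, fun j hj => ?_⟩
  have h := (hK j hj).1
  rw [Gamma_add_nat hx j] at h
  calc K1 / Real.Gamma x * Real.Gamma j * (j:ℝ)^x
      = K1 * Real.Gamma j * (j:ℝ)^x / Real.Gamma x := by ring
    _ ≤ risingFac x j * Real.Gamma x / Real.Gamma x := div_le_div_of_nonneg_right h hΓx.le
    _ = risingFac x j := by field_simp

lemma Tabs_decay (a b c : ℝ) (hc : 0 < c) :
    ∃ (m : ℕ) (C : ℝ), 0 ≤ C ∧ ∀ j : ℕ, 1 ≤ j →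
      Tabs a b c (m + j) ≤ C * (j:ℝ) ^ (a + b - c - 1) := by
  obtain ⟨mr, hmr⟩ := exists_nat_ge (max (1 - a) (1 - b))
  set m := mr with hm
  have hma : (1:ℝ) ≤ a + m := by
    have := (max_le_iff.mp hmr).1; linarith
  have hmb : (1:ℝ) ≤ b + m := by
    have := (max_le_iff.mp hmr).2; linarith
  have hma0 : (0:ℝ) < a + m := by linarith
  have hmb0 : (0:ℝ) < b + m := by linarith
  have hmc0 : (0:ℝ) < c + m := by positivity
  have hmm0 : (0:ℝ) < (m:ℝ) + 1 := by positivity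
  obtain ⟨Ca, hCa, hA⟩ := risingFac_upper hma0
  obtain ⟨Cb, hCb, hB⟩ := risingFac_upper hmb0
  obtain ⟨Cc, hCc, hC⟩ := risingFac_lower hmc0
  obtain ⟨Cm, hCm, hM⟩ := risingFac_lower hmm0
  have hrcm : 0 < risingFac c m := risingFac_pos hc m
  have hfm : (0:ℝ) < (m.factorial : ℝ) := by positivity
  set D := |risingFac a m| * |risingFac b m| / (risingFac c m * m.factorial) with hD
  set E := Ca * Cb / (Cc * Cm) with hE
  refine ⟨m, D * E, by positivity, fun j hj => ?_⟩
  have hj0 : (0:ℝ) < (j:ℝ) := by exact_mod_cast hj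
  have hΓj : (0:ℝ) < Real.Gamma j := Real.Gamma_pos_of_pos hj0
  -- split the rising factorials
  have hsplitden : risingFac c (m + j) * ((m+j).factorial : ℝ)
      = (risingFac c m * (m.factorial:ℝ)) * (risingFac (c+m) j * risingFac ((m:ℝ)+1) j) := by
    rw [risingFac_add, factorial_eq_risingFac]; push_cast; ring
  have hnum : |risingFac a (m+j) * risingFac b (m+j)|
      ≤ (|risingFac a m| * |risingFac b m|) * (risingFac (a+m) j * risingFac (b+m) j) := by
    rw [risingFac_add, risingFac_add, abs_mul, abs_mul, abs_mul]
    rw [abs_of_pos (risingFac_pos hma0 j), abs_of_pos (risingFac_pos hmb0 j)]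
    ring_nf; exact le_refl _
  have hden_pos : (0:ℝ) < (risingFac c m * (m.factorial:ℝ)) *
      (risingFac (c+m) j * risingFac ((m:ℝ)+1) j) := by
    have := risingFac_pos hmc0 j
    have := risingFac_pos hmm0 j
    positivity
  have step1 : Tabs a b c (m + j)
      ≤ (|risingFac a m| * |risingFac b m|) * (risingFac (a+m) j * risingFac (b+m) j) /
        ((risingFac c m * (m.factorial:ℝ)) * (risingFac (c+m) j * risingFac ((m:ℝ)+1) j)) := by
    unfold Tabs
    rw [hsplitden]
    exact div_le_div_of_nonneg_right hnum hden_pos.le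
  -- bound the j-dependent factor
  have hAj := hA j hj
  have hBj := hB j hj
  have hCj := hC j hj
  have hMj := hM j hj
  have hfrac : risingFac (a+m) j * risingFac (b+m) j /
      (risingFac (c+m) j * risingFac ((m:ℝ)+1) j)
      ≤ E * (j:ℝ) ^ (a + b - c - 1) := by
    have hnum2 : risingFac (a+m) j * risingFac (b+m) j
        ≤ (Ca * Real.Gamma j * (j:ℝ)^(a+m)) * (Cb * Real.Gamma j * (j:ℝ)^(b+m)) := by
      have h1 : 0 ≤ risingFac (a+m) j := (risingFac_pos hma0 j).le
      have h2 : 0 ≤ Ca * Real.Gamma j * (j:ℝ)^(a+m) := by positivity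
      exact mul_le_mul hAj hBj (risingFac_pos hmb0 j).le h2
    have hden2 : (Cc * Real.Gamma j * (j:ℝ)^(c+m)) * (Cm * Real.Gamma j * (j:ℝ)^((m:ℝ)+1))
        ≤ risingFac (c+m) j * risingFac ((m:ℝ)+1) j := by
      have h2 : 0 ≤ Cm * Real.Gamma j * (j:ℝ)^((m:ℝ)+1) := by positivity
      exact mul_le_mul hCj hMj h2 (risingFac_pos hmc0 j).le
    have hdpos : (0:ℝ) < (Cc * Real.Gamma j * (j:ℝ)^(c+m)) *
        (Cm * Real.Gamma j * (j:ℝ)^((m:ℝ)+1)) := by positivity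
    calc risingFac (a+m) j * risingFac (b+m) j /
        (risingFac (c+m) j * risingFac ((m:ℝ)+1) j)
        ≤ (Ca * Real.Gamma j * (j:ℝ)^(a+m)) * (Cb * Real.Gamma j * (j:ℝ)^(b+m)) /
          ((Cc * Real.Gamma j * (j:ℝ)^(c+m)) * (Cm * Real.Gamma j * (j:ℝ)^((m:ℝ)+1))) := by
          apply div_le_div₀ (by positivity) hnum2 hdpos hden2
      _ = E * ((j:ℝ)^(a+m) * (j:ℝ)^(b+m) / ((j:ℝ)^(c+m) * (j:ℝ)^((m:ℝ)+1))) := by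
          have h1 : Real.Gamma (j:ℝ) ≠ 0 := hΓj.ne'
          have h2 : ((j:ℝ)^(c+(m:ℝ))) ≠ 0 := (Real.rpow_pos_of_pos hj0 _).ne'
          have h3 : ((j:ℝ)^((m:ℝ)+1)) ≠ 0 := (Real.rpow_pos_of_pos hj0 _).ne'
          rw [hE]
          field_simp
      _ = E * (j:ℝ) ^ (a + b - c - 1) := by
          rw [← Real.rpow_add hj0, ← Real.rpow_add hj0, ← Real.rpow_sub hj0,
            show a + (m:ℝ) + (b + (m:ℝ)) - (c + (m:ℝ) + ((m:ℝ) + 1)) = a + b - c - 1 by ring]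
  -- combine
  have hDnn : 0 ≤ D := by positivity
  calc Tabs a b c (m + j) ≤ _ := step1
    _ = D * (risingFac (a+m) j * risingFac (b+m) j /
        (risingFac (c+m) j * risingFac ((m:ℝ)+1) j)) := by
        rw [hD, mul_div_mul_comm]
    _ ≤ D * (E * (j:ℝ) ^ (a + b - c - 1)) := mul_le_mul_of_nonneg_left hfrac hDnn
    _ = D * E * (j:ℝ) ^ (a + b - c - 1) := by ring

lemma Tabs_summable (a b c : ℝ) (hc : 0 < c) (hδ : 0 < c - a - b) :
    Summable (Tabs a b c) := by
  obtain ⟨m, C, hC, hbd⟩ := Tabs_decay a b c hc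
  rw [← summable_nat_add_iff (m+1)]
  have he : a + b - c - 1 < -1 := by linarith
  have hg : Summable (fun n : ℕ => C * ((n+1:ℕ):ℝ) ^ (a+b-c-1)) := by
    refine Summable.mul_left C ?_
    exact (summable_nat_add_iff 1).mpr (Real.summable_nat_rpow.mpr he)
  refine Summable.of_nonneg_of_le (fun n => Tabs_nonneg hc a b _) (fun n => ?_) hg
  have h : n + (m+1) = m + (n+1) := by omega
  rw [h]
  exact hbd (n+1) (Nat.succ_le_succ (Nat.zero_le n))

lemma Tabs_mul_tendsto (a b c : ℝ) (hc : 0 < c) (hδ : 0 < c - a - b) :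
    Tendsto (fun k : ℕ => (k:ℝ) * Tabs a b c k) atTop (𝓝 0) := by
  obtain ⟨m, C, hC, hbd⟩ := Tabs_decay a b c hc
  rw [← Filter.tendsto_add_atTop_iff_nat (m+1)]
  have hbnd : Tendsto (fun n : ℕ => (C * (m+1+1)) * ((n+1:ℕ):ℝ) ^ (a+b-c-1+1)) atTop (𝓝 0) := by
    have h0 : Tendsto (fun x : ℝ => x ^ (a+b-c-1+1)) atTop (𝓝 0) := by
      have : (0:ℝ) < -(a+b-c-1+1) := by linarith
      simpa using tendsto_rpow_neg_atTop this
    have h1 : Tendsto (fun n : ℕ => ((n+1:ℕ):ℝ) ^ (a+b-c-1+1)) atTop (𝓝 0) := by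
      exact h0.comp (tendsto_natCast_atTop_atTop.comp (tendsto_add_atTop_nat 1))
    simpa using h1.const_mul (C * (m+1+1))
  refine squeeze_zero (fun n => ?_) (fun n => ?_) hbnd
  · have h2 : (0:ℝ) ≤ ((n + (m+1) : ℕ):ℝ) := by positivity
    exact mul_nonneg h2 (Tabs_nonneg hc a b _)
  · have h : n + (m+1) = m + (n+1) := by omega
    rw [h]
    have hn1 : (1:ℕ) ≤ n + 1 := Nat.succ_le_succ (Nat.zero_le n)
    have hb := hbd (n+1) hn1
    have hnpos : (0:ℝ) < ((n+1:ℕ):ℝ) := by positivity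
    have hle : ((m + (n+1) : ℕ):ℝ) ≤ (m+1+1 : ℝ) * ((n+1:ℕ):ℝ) := by
      push_cast; nlinarith [Nat.cast_nonneg (α := ℝ) n, Nat.cast_nonneg (α := ℝ) m]
    calc ((m + (n+1) : ℕ):ℝ) * Tabs a b c (m + (n+1))
        ≤ ((m+1+1:ℝ) * ((n+1:ℕ):ℝ)) * (C * ((n+1:ℕ):ℝ) ^ (a+b-c-1)) := by
          refine mul_le_mul hle hb (Tabs_nonneg hc a b _) (by positivity)
      _ = (C * (m+1+1)) * (((n+1:ℕ):ℝ) * ((n+1:ℕ):ℝ) ^ (a+b-c-1)) := by ring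
      _ = (C * (m+1+1)) * ((n+1:ℕ):ℝ) ^ (a+b-c-1+1) := by
          rw [Real.rpow_add hnpos, Real.rpow_one]; ring

/-- The `₂F₁(a,b;c;1)` series value. -/
noncomputable def gSum (a b c : ℝ) : ℝ :=
  ∑' k : ℕ, risingFac a k * risingFac b k / (risingFac c k * k.factorial)

noncomputable def gTerm (a b c : ℝ) (k : ℕ) : ℝ :=
  risingFac a k * risingFac b k / (risingFac c k * k.factorial)

lemma gTerm_abs {c : ℝ} (hc : 0 < c) (a b : ℝ) (k : ℕ) : |gTerm a b c k| = Tabs a b c k := by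
  unfold gTerm Tabs
  have h1 : (0:ℝ) < risingFac c k := risingFac_pos hc k
  have h2 : (0:ℝ) < (k.factorial : ℝ) := by positivity
  rw [abs_div, abs_of_pos (mul_pos h1 h2)]

lemma gTerm_summable (a b c : ℝ) (hc : 0 < c) (hδ : 0 < c - a - b) :
    Summable (gTerm a b c) := by
  refine Summable.of_abs ?_
  have : (fun k => |gTerm a b c k|) = Tabs a b c := funext fun k => gTerm_abs hc a b k
  rw [this]
  exact Tabs_summable a b c hc hδ

lemma risingFac_one (x : ℝ) : risingFac x 1 = x := by
  rw [show (1:ℕ) = 0 + 1 from rfl, risingFac_succ, risingFac_zero]; simp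

lemma risingFac_succ_left (x : ℝ) (k : ℕ) :
    risingFac x (k + 1) = x * risingFac (x + 1) k := by
  rw [Nat.add_comm k 1, risingFac_add, risingFac_one]; norm_num

lemma risingFac_mono {x y : ℝ} (hx : 0 < x) (hxy : x ≤ y) (k : ℕ) :
    risingFac x k ≤ risingFac y k := by
  unfold risingFac
  refine Finset.prod_le_prod (fun i _ => by positivity) fun i _ => by linarith

/-- The contiguous relation for ₂F₁ at 1. -/
lemma gauss_contiguous (a b c : ℝ) (hc : 0 < c) (hδ : 0 < c - a - b) :
    c * (c - a - b) * gSum a b c = (c - a) * (c - b) * gSum a b (c + 1) := by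
  have hc1 : (0:ℝ) < c + 1 := by linarith
  have hδ1 : (0:ℝ) < (c + 1) - a - b := by linarith
  have hT := gTerm_summable a b c hc hδ
  have hU := gTerm_summable a b (c+1) hc1 hδ1
  set f : ℕ → ℝ := fun k => c * k * gTerm a b c k with hf
  -- the pointwise telescoping identity
  have hkey : ∀ k : ℕ, c * (c-a-b) * gTerm a b c k - (c-a) * (c-b) * gTerm a b (c+1) k
      = f k - f (k+1) := by
    intro k
    have hP : (0:ℝ) < risingFac c k := risingFac_pos hc k
    have hF : (0:ℝ) < (k.factorial : ℝ) := by positivity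
    have hck : (0:ℝ) < c + k := by positivity
    have e1 : gTerm a b c (k+1) = risingFac a k * (a+k) * (risingFac b k * (b+k)) /
        (risingFac c k * (c+k) * ((k.factorial:ℝ) * (k+1))) := by
      unfold gTerm
      rw [risingFac_succ, risingFac_succ, risingFac_succ, Nat.factorial_succ]
      push_cast; ring_nf
    have e2 : gTerm a b (c+1) k = risingFac a k * risingFac b k /
        ((risingFac c k * (c+k) / c) * k.factorial) := by
      unfold gTerm
      congr 2
      have := risingFac_succ_left c k
      rw [risingFac_succ c k] at this
      field_simp
      linarith [this]
    rw [hf]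
    simp only [e1, e2]
    unfold gTerm
    field_simp
    push_cast
    ring
  -- sum of the telescoping series is zero
  have hfsum : Summable (fun k => f k - f (k+1)) := by
    have : (fun k => f k - f (k+1)) = fun k =>
        c * (c-a-b) * gTerm a b c k - (c-a) * (c-b) * gTerm a b (c+1) k :=
      funext fun k => (hkey k).symm
    rw [this]
    exact ((hT.mul_left _).sub (hU.mul_left _))
  have hf0 : f 0 = 0 := by simp [hf]
  have hftends : Tendsto f atTop (𝓝 0) := by
    have hb := (Tabs_mul_tendsto a b c hc hδ).const_mul c
    rw [mul_zero] at hb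
    refine squeeze_zero_norm (fun n => ?_) hb
    rw [hf]
    simp only [norm_mul, Real.norm_eq_abs]
    rw [gTerm_abs hc, abs_of_pos hc, Nat.abs_cast, mul_assoc]
  have htel : ∑' k, (f k - f (k+1)) = 0 := by
    have h1 := hfsum.hasSum.tendsto_sum_nat
    have h2 : Tendsto (fun n => ∑ i ∈ Finset.range n, (f i - f (i+1))) atTop (𝓝 (f 0 - 0)) := by
      have : (fun n => ∑ i ∈ Finset.range n, (f i - f (i+1))) = fun n => f 0 - f n := by
        funext n; exact Finset.sum_range_sub' f n
      rw [this]
      exact tendsto_const_nhds.sub hftends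
    have := tendsto_nhds_unique h1 h2
    rw [this, hf0, sub_zero]
  -- conclude
  have hsplit : ∑' k, (c * (c-a-b) * gTerm a b c k - (c-a) * (c-b) * gTerm a b (c+1) k)
      = c * (c-a-b) * gSum a b c - (c-a) * (c-b) * gSum a b (c+1) := by
    rw [Summable.tsum_sub (hT.mul_left _) (hU.mul_left _), tsum_mul_left, tsum_mul_left]
    rfl
  have : ∑' k, (c * (c-a-b) * gTerm a b c k - (c-a) * (c-b) * gTerm a b (c+1) k) = 0 := by
    rw [show (fun k => c * (c-a-b) * gTerm a b c k - (c-a) * (c-b) * gTerm a b (c+1) k)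
        = fun k => f k - f (k+1) from funext hkey]
    exact htel
  rw [hsplit] at this
  linarith

lemma gauss_iterate (a b c : ℝ) (hc : 0 < c) (hδ : 0 < c - a - b) :
    ∀ n : ℕ, gSum a b c =
      (∏ j ∈ Finset.range n, ((c-a+j)*(c-b+j)/((c+j)*(c-a-b+j)))) * gSum a b (c + n) := by
  intro n
  induction n with
  | zero => simp
  | succ n ih =>
      have hn0 : (0:ℝ) ≤ (n:ℝ) := Nat.cast_nonneg n
      have hc' : (0:ℝ) < c + n := by linarith
      have hδ' : (0:ℝ) < (c + n) - a - b := by linarith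
      have hrel := gauss_contiguous a b (c + n) hc' hδ'
      have hne : ((c+n) * ((c+n) - a - b)) ≠ 0 := by positivity
      have hstep : gSum a b (c + n) =
          ((c+n-a)*(c+n-b)/((c+n)*((c+n)-a-b))) * gSum a b (c + n + 1) := by
        rw [eq_comm, div_mul_eq_mul_div, div_eq_iff hne]
        calc (c + n - a) * (c + n - b) * gSum a b (c + n + 1)
            = (c + n - a) * (c + n - b) * gSum a b ((c+n) + 1) := by norm_num
          _ = (c+n) * ((c+n) - a - b) * gSum a b (c+n) := by
              rw [← hrel]
          _ = gSum a b (c + n) * ((c+n) * ((c+n) - a - b)) := by ring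
      rw [ih, hstep, Finset.prod_range_succ]
      have hcast : c + ((n:ℕ):ℝ) + 1 = c + ((n+1:ℕ):ℝ) := by push_cast; ring
      rw [hcast]
      ring

lemma gSum_shift_tendsto (a b c : ℝ) (hc : 0 < c) (hδ : 0 < c - a - b) :
    Tendsto (fun n : ℕ => gSum a b (c + n)) atTop (𝓝 1) := by
  have hs1 : Summable (fun k => Tabs a b c (k+1)) :=
    (summable_nat_add_iff 1).mpr (Tabs_summable a b c hc hδ)
  set M := ∑' k, Tabs a b c (k+1) with hM
  have hMn : 0 ≤ M := tsum_nonneg fun k => Tabs_nonneg hc a b _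
  have key : ∀ n : ℕ, 1 ≤ n → |gSum a b (c + n) - 1| ≤ c / n * M := by
    intro n hn
    have hn0 : (0:ℝ) < (n:ℝ) := by exact_mod_cast hn
    have hc' : (0:ℝ) < c + n := by linarith
    have hδ' : (0:ℝ) < (c + n) - a - b := by linarith
    have hsumn := gTerm_summable a b (c+n) hc' hδ'
    have hsumn1 : Summable (fun k => gTerm a b (c+n) (k+1)) :=
      (summable_nat_add_iff 1).mpr hsumn
    have habs1 : Summable (fun k => Tabs a b (c+n) (k+1)) :=
      (summable_nat_add_iff 1).mpr (Tabs_summable a b (c+n) hc' hδ')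
    have h0 : gTerm a b (c+n) 0 = 1 := by
      unfold gTerm; rw [risingFac_zero, risingFac_zero, risingFac_zero]; norm_num
    have hsplit : gSum a b (c + n) = 1 + ∑' k, gTerm a b (c+n) (k+1) := by
      rw [show gSum a b (c+n) = ∑' k, gTerm a b (c+n) k from rfl,
        Summable.tsum_eq_zero_add hsumn, h0]
    -- pointwise comparison
    have hpt : ∀ k : ℕ, Tabs a b (c+n) (k+1) ≤ c/(c+n) * Tabs a b c (k+1) := by
      intro k
      have hF : (0:ℝ) < ((k+1).factorial : ℝ) := by positivity
      have hr1 : (0:ℝ) < risingFac (c+1) k := risingFac_pos (by linarith) k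
      have hrc : (0:ℝ) < risingFac c (k+1) := risingFac_pos hc (k+1)
      have hlow : ((c+n)/c) * risingFac c (k+1) ≤ risingFac (c+n) (k+1) := by
        rw [risingFac_succ_left, risingFac_succ_left]
        have hmono : risingFac (c+1) k ≤ risingFac (c+n+1) k :=
          risingFac_mono (by linarith) (by linarith) k
        calc ((c+n)/c) * (c * risingFac (c+1) k) = (c+n) * risingFac (c+1) k := by
              field_simp
          _ ≤ (c+n) * risingFac (c+n+1) k := by nlinarith
      have hlp : (0:ℝ) < ((c+n)/c) * risingFac c (k+1) * ((k+1).factorial:ℝ) := by positivity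
      calc Tabs a b (c+n) (k+1)
          ≤ |risingFac a (k+1) * risingFac b (k+1)| /
            (((c+n)/c) * risingFac c (k+1) * ((k+1).factorial:ℝ)) := by
            unfold Tabs
            refine div_le_div_of_nonneg_left (abs_nonneg _) hlp ?_
            exact mul_le_mul_of_nonneg_right hlow hF.le
        _ = c/(c+n) * Tabs a b c (k+1) := by
            unfold Tabs
            rw [eq_comm, mul_div_assoc', eq_div_iff (by positivity)]
            field_simp
    have hbound : |gSum a b (c + n) - 1| ≤ c/(c+n) * M := by
      rw [hsplit, add_sub_cancel_left]
      calc |∑' k, gTerm a b (c+n) (k+1)| ≤ ∑' k, Tabs a b (c+n) (k+1) := by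
            have := norm_tsum_le_tsum_norm (f := fun k => gTerm a b (c+n) (k+1)) ?_
            · simpa [Real.norm_eq_abs, gTerm_abs hc'] using this
            · simpa [Real.norm_eq_abs, gTerm_abs hc'] using habs1
        _ ≤ ∑' k, c/(c+n) * Tabs a b c (k+1) := Summable.tsum_le_tsum hpt habs1 (hs1.mul_left _)
        _ = c/(c+n) * M := by rw [tsum_mul_left]
    refine hbound.trans ?_
    have : c/(c+n) ≤ c/n := by
      refine div_le_div_of_nonneg_left hc.le hn0 (by linarith)
    exact mul_le_mul_of_nonneg_right this hMn
  -- conclude by squeeze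
  have hb : Tendsto (fun n : ℕ => c / n * M) atTop (𝓝 0) := by
    simpa using (tendsto_const_div_atTop_nhds_zero_nat c).mul_const M
  have hz : Tendsto (fun n : ℕ => gSum a b (c + n) - 1) atTop (𝓝 0) := by
    refine squeeze_zero_norm' ?_ hb
    filter_upwards [eventually_ge_atTop 1] with n hn
    exact key n hn
  have := hz.add_const 1
  simpa using this

/-- **Gauss's summation theorem** for ₂F₁ at 1. -/
lemma gauss_summation (a b c : ℝ) (hc : 0 < c) (hδ : 0 < c - a - b) :
    gSum a b c = Real.Gamma c * Real.Gamma (c - a - b) /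
      (Real.Gamma (c - a) * Real.Gamma (c - b)) := by
  by_cases hdeg : (∃ m : ℕ, c - a = -(m:ℝ)) ∨ (∃ m : ℕ, c - b = -(m:ℝ))
  · -- degenerate case : both sides vanish
    have hrhs : Real.Gamma (c - a) * Real.Gamma (c - b) = 0 := by
      rcases hdeg with ⟨m, hm⟩ | ⟨m, hm⟩
      · rw [(Real.Gamma_eq_zero_iff _).mpr ⟨m, hm⟩, zero_mul]
      · rw [(Real.Gamma_eq_zero_iff _).mpr ⟨m, hm⟩, mul_zero]
    rw [hrhs, div_zero]
    -- LHS is zero : the product Q vanishes for large n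
    rcases hdeg with ⟨m, hm⟩ | ⟨m, hm⟩
    · have := gauss_iterate a b c hc hδ (m+1)
      rw [this, Finset.prod_eq_zero (Finset.mem_range.mpr (Nat.lt_succ_self m))
        (by rw [hm]; ring_nf), zero_mul]
    · have := gauss_iterate a b c hc hδ (m+1)
      rw [this, Finset.prod_eq_zero (Finset.mem_range.mpr (Nat.lt_succ_self m))
        (by rw [hm]; ring_nf), zero_mul]
  · push_neg at hdeg
    obtain ⟨hda, hdb⟩ := hdeg
    have hΓa : Real.Gamma (c - a) ≠ 0 := Real.Gamma_ne_zero hda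
    have hΓb : Real.Gamma (c - b) ≠ 0 := Real.Gamma_ne_zero hdb
    set δ := c - a - b with hδdef
    set L := Real.Gamma c * Real.Gamma δ / (Real.Gamma (c-a) * Real.Gamma (c-b)) with hL
    -- the product as a ratio of GammaSeq's
    have hQ : ∀ n : ℕ, 1 ≤ n →
        (∏ j ∈ Finset.range (n+1), ((c-a+j)*(c-b+j)/((c+j)*(c-a-b+j))))
        = Real.GammaSeq c n * Real.GammaSeq δ n /
          (Real.GammaSeq (c-a) n * Real.GammaSeq (c-b) n) := by
      intro n hn
      have hn0 : (0:ℝ) < (n:ℝ) := by exact_mod_cast hn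
      have hPca : risingFac (c-a) (n+1) ≠ 0 := by
        refine Finset.prod_ne_zero_iff.mpr fun j _ => ?_
        intro h
        exact hda j (by linarith)
      have hPcb : risingFac (c-b) (n+1) ≠ 0 := by
        refine Finset.prod_ne_zero_iff.mpr fun j _ => ?_
        intro h
        exact hdb j (by linarith)
      have hPc : (0:ℝ) < risingFac c (n+1) := risingFac_pos hc _
      have hPδ : (0:ℝ) < risingFac δ (n+1) := risingFac_pos hδ _
      have hF : ((n.factorial : ℝ)) ≠ 0 := by positivity
      have hpc : ((n:ℝ) ^ c) ≠ 0 := (Real.rpow_pos_of_pos hn0 _).ne'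
      have hpδ : ((n:ℝ) ^ δ) ≠ 0 := (Real.rpow_pos_of_pos hn0 _).ne'
      have hpca : ((n:ℝ) ^ (c-a)) ≠ 0 := (Real.rpow_pos_of_pos hn0 _).ne'
      have hpcb : ((n:ℝ) ^ (c-b)) ≠ 0 := (Real.rpow_pos_of_pos hn0 _).ne'
      have hpow : (n:ℝ)^(c-a) * (n:ℝ)^(c-b) = (n:ℝ)^c * (n:ℝ)^δ := by
        rw [← Real.rpow_add hn0, ← Real.rpow_add hn0, hδdef]
        congr 1
        ring
      have hprod : (∏ j ∈ Finset.range (n+1), ((c-a+j)*(c-b+j)/((c+j)*(c-a-b+j))))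
          = (risingFac (c-a) (n+1) * risingFac (c-b) (n+1)) /
            (risingFac c (n+1) * risingFac δ (n+1)) := by
        rw [risingFac, risingFac, risingFac, risingFac, ← Finset.prod_mul_distrib,
          ← Finset.prod_mul_distrib, ← Finset.prod_div_distrib]
      rw [hprod]
      show _ = ((n:ℝ)^c * n.factorial / risingFac c (n+1)) *
          ((n:ℝ)^δ * n.factorial / risingFac δ (n+1)) /
          (((n:ℝ)^(c-a) * n.factorial / risingFac (c-a) (n+1)) *
           ((n:ℝ)^(c-b) * n.factorial / risingFac (c-b) (n+1)))
      field_simp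
      linear_combination hpow
    -- limit of the GammaSeq ratio
    have hlim1 : Tendsto (fun n : ℕ => Real.GammaSeq c n * Real.GammaSeq δ n /
        (Real.GammaSeq (c-a) n * Real.GammaSeq (c-b) n)) atTop (𝓝 L) := by
      rw [hL]
      exact ((Real.GammaSeq_tendsto_Gamma c).mul (Real.GammaSeq_tendsto_Gamma δ)).div
        ((Real.GammaSeq_tendsto_Gamma (c-a)).mul (Real.GammaSeq_tendsto_Gamma (c-b)))
        (mul_ne_zero hΓa hΓb)
    have hlimQ : Tendsto (fun n : ℕ =>
        (∏ j ∈ Finset.range (n+1), ((c-a+j)*(c-b+j)/((c+j)*(c-a-b+j))))) atTop (𝓝 L) := by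
      refine hlim1.congr' ?_
      filter_upwards [eventually_ge_atTop 1] with n hn
      exact (hQ n hn).symm
    -- limit of the shifted sum
    have hlimS : Tendsto (fun n : ℕ => gSum a b (c + ((n+1:ℕ):ℝ))) atTop (𝓝 1) := by
      have h := gSum_shift_tendsto a b c hc hδ
      exact h.comp (tendsto_add_atTop_nat 1)
    have hlimprod : Tendsto (fun n : ℕ =>
        (∏ j ∈ Finset.range (n+1), ((c-a+j)*(c-b+j)/((c+j)*(c-a-b+j)))) *
        gSum a b (c + ((n+1:ℕ):ℝ))) atTop (𝓝 (L * 1)) := hlimQ.mul hlimS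
    have hconst : Tendsto (fun _ : ℕ => gSum a b c) atTop (𝓝 (gSum a b c)) :=
      tendsto_const_nhds
    have heq : (fun _ : ℕ => gSum a b c) = fun n : ℕ =>
        (∏ j ∈ Finset.range (n+1), ((c-a+j)*(c-b+j)/((c+j)*(c-a-b+j)))) *
        gSum a b (c + ((n+1:ℕ):ℝ)) := by
      funext n
      exact gauss_iterate a b c hc hδ (n+1)
    rw [heq] at hconst
    have := tendsto_nhds_unique hconst hlimprod
    rw [this, mul_one]

lemma betaReal_integrable {x y : ℝ} (hx : 0 < x) (hy : 0 < y) :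
    IntervalIntegrable (fun u : ℝ => u ^ (x-1) * (1-u) ^ (y-1)) volume 0 1 := by
  have h := (Complex.betaIntegral_convergent (u := (x:ℂ)) (v := (y:ℂ))
    (by simpa using hx) (by simpa using hy)).norm
  refine h.congr_ae ?_
  have hsub : Set.uIoc (0:ℝ) 1 = Set.Ioc 0 1 := by
    rw [Set.uIoc_of_le (by norm_num : (0:ℝ) ≤ 1)]
  rw [Filter.EventuallyEq, ae_restrict_iff' measurableSet_uIoc]
  refine Filter.Eventually.of_forall fun u hu => ?_
  rw [hsub] at hu
  have hu0 : 0 ≤ u := hu.1.le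
  have hu1 : 0 ≤ 1 - u := by linarith [hu.2]
  have e1 : ((u:ℂ)) ^ ((x:ℂ) - 1) = ((u ^ (x-1) : ℝ) : ℂ) := by
    rw [Complex.ofReal_cpow hu0]; push_cast; ring_nf
  have e2 : ((1:ℂ) - (u:ℂ)) ^ ((y:ℂ) - 1) = (((1-u) ^ (y-1) : ℝ) : ℂ) := by
    rw [show ((1:ℂ) - (u:ℂ)) = (((1-u:ℝ)):ℂ) by push_cast; ring,
      Complex.ofReal_cpow hu1]
    push_cast; ring_nf
  simp only [norm_mul, e1, e2, Complex.norm_real, Real.norm_eq_abs]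
  rw [abs_of_nonneg (Real.rpow_nonneg hu0 _), abs_of_nonneg (Real.rpow_nonneg hu1 _)]

lemma betaReal_eq {x y : ℝ} (hx : 0 < x) (hy : 0 < y) :
    ∫ u in (0:ℝ)..1, u ^ (x-1) * (1-u) ^ (y-1)
      = Real.Gamma x * Real.Gamma y / Real.Gamma (x+y) := by
  have hβ : Complex.betaIntegral x y
      = ((∫ u in (0:ℝ)..1, u ^ (x-1) * (1-u) ^ (y-1) : ℝ) : ℂ) := by
    rw [Complex.betaIntegral, ← intervalIntegral.integral_ofReal]
    refine intervalIntegral.integral_congr fun u hu => ?_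
    rw [Set.uIcc_of_le (by norm_num : (0:ℝ) ≤ 1)] at hu
    have hu0 : 0 ≤ u := hu.1
    have hu1 : 0 ≤ 1 - u := by linarith [hu.2]
    rw [show ((x:ℂ)-1) = ((x-1:ℝ):ℂ) by push_cast; ring,
      show ((y:ℂ)-1) = ((y-1:ℝ):ℂ) by push_cast; ring,
      show ((1:ℂ) - (u:ℂ)) = ((1-u:ℝ):ℂ) by push_cast; ring,
      ← Complex.ofReal_cpow hu0, ← Complex.ofReal_cpow hu1, ← Complex.ofReal_mul]
  have hmain := Complex.Gamma_mul_Gamma_eq_betaIntegral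
    (s := (x:ℂ)) (t := (y:ℂ)) (by simpa using hx) (by simpa using hy)
  rw [hβ] at hmain
  have hxy : ((x:ℂ)) + (y:ℂ) = ((x+y:ℝ):ℂ) := by push_cast; ring
  rw [hxy, Complex.Gamma_ofReal, Complex.Gamma_ofReal, Complex.Gamma_ofReal] at hmain
  have hreal : Real.Gamma x * Real.Gamma y
      = Real.Gamma (x+y) * ∫ u in (0:ℝ)..1, u ^ (x-1) * (1-u) ^ (y-1) := by
    exact_mod_cast hmain
  have hΓ : Real.Gamma (x+y) ≠ 0 := (Real.Gamma_pos_of_pos (by linarith)).ne'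
  field_simp at hreal ⊢
  linarith [hreal]

lemma J_eq (a b α ρ : ℝ) (hα : 0 < α) (hρ : 0 < ρ) (hδ : 0 < ρ + α - a - b) :
    ∫ u in (0:ℝ)..1, (1-u) ^ (α-1) * hyp2F1 a b α (1-u) * u ^ (ρ-1)
      = Real.Gamma α * Real.Gamma ρ / Real.Gamma (ρ+α) * gSum a b (ρ+α) := by
  have hc : (0:ℝ) < ρ + α := by linarith
  set F : ℕ → ℝ → ℝ :=
    fun k u => gTerm a b α k * ((1-u) ^ (α+(k:ℝ)-1) * u ^ (ρ-1)) with hF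
  set C0 := Real.Gamma α * Real.Gamma ρ / Real.Gamma (ρ+α) with hC0
  -- the Beta integral values over Ioo
  have hB : ∀ k : ℕ, ∫ u in Set.Ioo (0:ℝ) 1, u ^ (ρ-1) * (1-u) ^ (α+(k:ℝ)-1)
      = Real.Gamma ρ * Real.Gamma (α+(k:ℝ)) / Real.Gamma (ρ+(α+(k:ℝ))) := by
    intro k
    have hαk : (0:ℝ) < α + (k:ℝ) := by positivity
    rw [← MeasureTheory.integral_Ioc_eq_integral_Ioo,
      ← intervalIntegral.integral_of_le (by norm_num : (0:ℝ) ≤ 1)]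
    exact betaReal_eq hρ hαk
  -- integrability of each term over Ioo
  have hint : ∀ k : ℕ, IntegrableOn (F k) (Set.Ioo (0:ℝ) 1) volume := by
    intro k
    have hαk : (0:ℝ) < α + (k:ℝ) := by positivity
    have h1 : IntegrableOn (fun u : ℝ => u ^ (ρ-1) * (1-u) ^ (α+(k:ℝ)-1))
        (Set.Ioo (0:ℝ) 1) volume :=
      ((betaReal_integrable hρ hαk).1).mono_set Set.Ioo_subset_Ioc_self
    have h2 := h1.const_mul (gTerm a b α k)
    have hfe : F k = fun u : ℝ => gTerm a b α k * (u ^ (ρ-1) * (1-u) ^ (α+(k:ℝ)-1)) := by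
      funext u
      simp only [hF]
      ring
    rw [IntegrableOn, hfe]
    exact h2
  -- measurability
  have hmeas : ∀ k : ℕ, AEStronglyMeasurable (F k) (volume.restrict (Set.Ioo (0:ℝ) 1)) :=
    fun k => (hint k).aestronglyMeasurable
  -- the identity between term values
  have hkey : ∀ k : ℕ, gTerm a b α k * (Real.Gamma ρ * Real.Gamma (α+(k:ℝ)) /
      Real.Gamma (ρ+(α+(k:ℝ)))) = C0 * gTerm a b (ρ+α) k := by
    intro k
    have e1 : Real.Gamma (α+(k:ℝ)) = risingFac α k * Real.Gamma α := Gamma_add_nat hα k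
    have e2 : Real.Gamma (ρ+(α+(k:ℝ))) = risingFac (ρ+α) k * Real.Gamma (ρ+α) := by
      rw [show ρ+(α+(k:ℝ)) = (ρ+α)+(k:ℝ) by ring]
      exact Gamma_add_nat hc k
    have p1 : (0:ℝ) < risingFac α k := risingFac_pos hα k
    have p2 : (0:ℝ) < risingFac (ρ+α) k := risingFac_pos hc k
    have p3 : (0:ℝ) < Real.Gamma α := Real.Gamma_pos_of_pos hα
    have p4 : (0:ℝ) < Real.Gamma (ρ+α) := Real.Gamma_pos_of_pos hc
    have p5 : (0:ℝ) < (k.factorial : ℝ) := by positivity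
    rw [hC0, e1, e2]
    unfold gTerm
    field_simp
  have hkeyabs : ∀ k : ℕ, Tabs a b α k * (Real.Gamma ρ * Real.Gamma (α+(k:ℝ)) /
      Real.Gamma (ρ+(α+(k:ℝ)))) = C0 * Tabs a b (ρ+α) k := by
    intro k
    have e1 : Real.Gamma (α+(k:ℝ)) = risingFac α k * Real.Gamma α := Gamma_add_nat hα k
    have e2 : Real.Gamma (ρ+(α+(k:ℝ))) = risingFac (ρ+α) k * Real.Gamma (ρ+α) := by
      rw [show ρ+(α+(k:ℝ)) = (ρ+α)+(k:ℝ) by ring]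
      exact Gamma_add_nat hc k
    have p1 : (0:ℝ) < risingFac α k := risingFac_pos hα k
    have p2 : (0:ℝ) < risingFac (ρ+α) k := risingFac_pos hc k
    have p3 : (0:ℝ) < Real.Gamma α := Real.Gamma_pos_of_pos hα
    have p4 : (0:ℝ) < Real.Gamma (ρ+α) := Real.Gamma_pos_of_pos hc
    have p5 : (0:ℝ) < (k.factorial : ℝ) := by positivity
    rw [hC0, e1, e2]
    unfold Tabs
    field_simp
  -- value of each term integral
  have hval : ∀ k : ℕ, ∫ u in Set.Ioo (0:ℝ) 1, F k u = C0 * gTerm a b (ρ+α) k := by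
    intro k
    have : ∫ u in Set.Ioo (0:ℝ) 1, F k u
        = gTerm a b α k * ∫ u in Set.Ioo (0:ℝ) 1, u ^ (ρ-1) * (1-u) ^ (α+(k:ℝ)-1) := by
      rw [← MeasureTheory.integral_const_mul]
      refine MeasureTheory.setIntegral_congr_fun measurableSet_Ioo fun u _ => ?_
      simp only [hF]; ring
    rw [this, hB k, hkey k]
  -- finiteness of the sum of lintegrals
  have hsummable : Summable (fun k => C0 * Tabs a b (ρ+α) k) :=
    (Tabs_summable a b (ρ+α) hc (by linarith)).mul_left C0
  have hnorm : ∀ k : ℕ, ∫ u in Set.Ioo (0:ℝ) 1, ‖F k u‖ = C0 * Tabs a b (ρ+α) k := by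
    intro k
    have : ∫ u in Set.Ioo (0:ℝ) 1, ‖F k u‖
        = |gTerm a b α k| * ∫ u in Set.Ioo (0:ℝ) 1, u ^ (ρ-1) * (1-u) ^ (α+(k:ℝ)-1) := by
      rw [← MeasureTheory.integral_const_mul]
      refine MeasureTheory.setIntegral_congr_fun measurableSet_Ioo fun u hu => ?_
      have hu0 : (0:ℝ) ≤ u := hu.1.le
      have hu1 : (0:ℝ) ≤ 1 - u := by linarith [hu.2.le]
      simp only [hF, Real.norm_eq_abs, abs_mul]
      rw [abs_of_nonneg (Real.rpow_nonneg hu1 _), abs_of_nonneg (Real.rpow_nonneg hu0 _)]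
      ring
    rw [this, hB k, gTerm_abs hα, hkeyabs k]
  have hf' : ∑' k, ∫⁻ u in Set.Ioo (0:ℝ) 1, ‖F k u‖ₑ ≠ ⊤ := by
    have heq : ∀ k : ℕ, ∫⁻ u in Set.Ioo (0:ℝ) 1, ‖F k u‖ₑ
        = ENNReal.ofReal (C0 * Tabs a b (ρ+α) k) := by
      intro k
      rw [← MeasureTheory.ofReal_integral_norm_eq_lintegral_enorm (hint k), hnorm k]
    rw [funext heq, ← ENNReal.ofReal_tsum_of_nonneg (fun k => ?_) hsummable]
    · exact ENNReal.ofReal_ne_top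
    · rw [← hnorm k]
      exact MeasureTheory.integral_nonneg fun u => norm_nonneg _
  -- the interchange
  have hswap := MeasureTheory.integral_tsum hmeas hf'
  -- pointwise identity of the integrand
  have hpt : ∀ u ∈ Set.Ioo (0:ℝ) 1,
      (1-u) ^ (α-1) * hyp2F1 a b α (1-u) * u ^ (ρ-1) = ∑' k, F k u := by
    intro u hu
    have hu1 : (0:ℝ) < 1 - u := by linarith [hu.2]
    rw [hyp2F1, ← tsum_mul_left, ← tsum_mul_right]
    refine tsum_congr fun k => ?_
    simp only [hF]
    unfold gTerm
    rw [show (1-u) ^ (k:ℕ) = (1-u) ^ ((k:ℕ):ℝ) from (Real.rpow_natCast _ k).symm,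
      show α + (k:ℝ) - 1 = (α - 1) + (k:ℝ) by ring, Real.rpow_add hu1]
    field_simp
  calc ∫ u in (0:ℝ)..1, (1-u) ^ (α-1) * hyp2F1 a b α (1-u) * u ^ (ρ-1)
      = ∫ u in Set.Ioo (0:ℝ) 1, (1-u) ^ (α-1) * hyp2F1 a b α (1-u) * u ^ (ρ-1) := by
        rw [intervalIntegral.integral_of_le (by norm_num : (0:ℝ) ≤ 1),
          MeasureTheory.integral_Ioc_eq_integral_Ioo]
    _ = ∫ u in Set.Ioo (0:ℝ) 1, ∑' k, F k u :=
        MeasureTheory.setIntegral_congr_fun measurableSet_Ioo hpt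
    _ = ∑' k, ∫ u in Set.Ioo (0:ℝ) 1, F k u := hswap
    _ = ∑' k, C0 * gTerm a b (ρ+α) k := by rw [funext hval]
    _ = C0 * gSum a b (ρ+α) := by rw [tsum_mul_left]; rfl

theorem saigo_integral_power (α β γ ρ : ℝ) (hα : 0 < α) (hρ0 : 0 < ρ)
    (hρ : β - γ < ρ) :
    ∀ t : ℝ, 0 < t →
      saigoI α β γ (fun s => s ^ (ρ - 1)) t =
        (Real.Gamma ρ * Real.Gamma (ρ - β + γ) /
          (Real.Gamma (ρ - β) * Real.Gamma (ρ + α + γ))) * t ^ (ρ - β - 1) := by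
  intro t ht
  have hδ' : (0:ℝ) < ρ + α - (α+β) - (-γ) := by linarith
  have hc : (0:ℝ) < ρ + α := by linarith
  -- substitution s = t * u
  have hsub := intervalIntegral.smul_integral_comp_mul_left
    (a := (0:ℝ)) (b := 1)
    (f := fun s => (t - s) ^ (α-1) * hyp2F1 (α+β) (-γ) α (1 - s / t) * s ^ (ρ-1)) t
  simp only [mul_zero, mul_one, smul_eq_mul] at hsub
  -- rewrite the inner integral
  have hinner : (∫ u in (0:ℝ)..1,
      (t - t*u) ^ (α-1) * hyp2F1 (α+β) (-γ) α (1 - (t*u) / t) * (t*u) ^ (ρ-1))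
      = t ^ (α-1) * t ^ (ρ-1) *
        ∫ u in (0:ℝ)..1, (1-u) ^ (α-1) * hyp2F1 (α+β) (-γ) α (1-u) * u ^ (ρ-1) := by
    rw [intervalIntegral.integral_of_le (by norm_num : (0:ℝ) ≤ 1),
      intervalIntegral.integral_of_le (by norm_num : (0:ℝ) ≤ 1),
      MeasureTheory.integral_Ioc_eq_integral_Ioo, MeasureTheory.integral_Ioc_eq_integral_Ioo,
      ← MeasureTheory.integral_const_mul]
    refine MeasureTheory.setIntegral_congr_fun measurableSet_Ioo fun u hu => ?_
    have hu0 : (0:ℝ) ≤ u := hu.1.le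
    have hu1 : (0:ℝ) ≤ 1 - u := by linarith [hu.2.le]
    have e1 : t - t*u = t * (1-u) := by ring
    have e2 : 1 - (t*u)/t = 1 - u := by rw [mul_div_cancel_left₀ u ht.ne']
    rw [e1, e2, Real.mul_rpow ht.le hu1, Real.mul_rpow ht.le hu0]
    ring
  have hJ := J_eq (α+β) (-γ) α ρ hα hρ0 hδ'
  -- the Gauss sum value
  have hS := gauss_summation (α+β) (-γ) (ρ+α) hc hδ'
  rw [show ρ + α - (α+β) - (-γ) = ρ - β + γ by ring,
    show ρ + α - (α+β) = ρ - β by ring,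
    show ρ + α - (-γ) = ρ + α + γ by ring] at hS
  -- the power of t
  have hpow : t ^ (-α-β) * (t * (t ^ (α-1) * t ^ (ρ-1))) = t ^ (ρ-β-1) := by
    rw [show t ^ (-α-β) * (t * (t ^ (α-1) * t ^ (ρ-1)))
        = t ^ (-α-β) * t ^ (1:ℝ) * t ^ (α-1) * t ^ (ρ-1) from by rw [Real.rpow_one]; ring,
      ← Real.rpow_add ht, ← Real.rpow_add ht, ← Real.rpow_add ht]
    congr 1
    ring
  -- the Gamma factor
  have hΓα : Real.Gamma α ≠ 0 := (Real.Gamma_pos_of_pos hα).ne'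
  have hΓρα : Real.Gamma (ρ+α) ≠ 0 := (Real.Gamma_pos_of_pos hc).ne'
  set K := Real.Gamma (ρ-β) * Real.Gamma (ρ+α+γ) with hK
  have hGam : Real.Gamma α * Real.Gamma ρ / Real.Gamma (ρ+α) *
      (Real.Gamma (ρ+α) * Real.Gamma (ρ-β+γ) / K) / Real.Gamma α
      = Real.Gamma ρ * Real.Gamma (ρ-β+γ) / K := by
    by_cases hK0 : K = 0
    · rw [hK0, div_zero, mul_zero, zero_div, div_zero]
    · field_simp
  -- put everything together
  show (t ^ (-α - β) / Real.Gamma α) *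
      (∫ s in (0:ℝ)..t, (t - s) ^ (α-1) * hyp2F1 (α+β) (-γ) α (1 - s/t) * s ^ (ρ-1)) = _
  rw [← hsub, hinner, hJ, hS]
  calc (t ^ (-α-β) / Real.Gamma α) *
      (t * (t ^ (α-1) * t ^ (ρ-1) *
        (Real.Gamma α * Real.Gamma ρ / Real.Gamma (ρ+α) *
          (Real.Gamma (ρ+α) * Real.Gamma (ρ-β+γ) / K))))
      = (t ^ (-α-β) * (t * (t ^ (α-1) * t ^ (ρ-1)))) *
        (Real.Gamma α * Real.Gamma ρ / Real.Gamma (ρ+α) *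
          (Real.Gamma (ρ+α) * Real.Gamma (ρ-β+γ) / K) / Real.Gamma α) := by
        ring
    _ = t ^ (ρ-β-1) * (Real.Gamma ρ * Real.Gamma (ρ-β+γ) / K) := by rw [hpow, hGam]
    _ = Real.Gamma ρ * Real.Gamma (ρ-β+γ) / K * t ^ (ρ-β-1) := by ring
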